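/- With the notation in the context, the polynomial identity y₃·r₁ − y₁·r₃ = A₂·γ₄·φ₆ holds in the polynomial ring ℚ[a₁,a₂,b₁,b₂,b₃,c₁,c₂,a₁',a₂',b₁',b₂',b₃',c₁',c₂',y₁,y₂,y₃]. -/
import Mathlib


open MvPolynomial

noncomputable section

/-- The polynomial ring ℚ[a₁,a₂,b₁,b₂,b₃,c₁,c₂,a₁',a₂',b₁',b₂',b₃',c₁',c₂',y₁,y₂,y₃]. -/
abbrev R17 : Type := MvPolynomial (Fin 17) ℚ

def a1 : R17 := X 0
def a2 : R17 := X 1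
def b1 : R17 := X 2
def b2 : R17 := X 3
def b3 : R17 := X 4
def c1 : R17 := X 5
def c2 : R17 := X 6
def a1' : R17 := X 7
def a2' : R17 := X 8
def b1' : R17 := X 9
def b2' : R17 := X 10
def b3' : R17 := X 11
def c1' : R17 := X 12
def c2' : R17 := X 13
def y1 : R17 := X 14
def y2 : R17 := X 15
def y3 : R17 := X 16

/-- w evaluated at y. -/
def w : R17 :=
  y3^2*(a1*y1 + a2*y2) + y3*(b1*y1^2 + b2*y1*y2 + b3*y2^2) + c1*y1^2*y2 + c2*y1*y2^2
/-- w' evaluated at y. -/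
def w' : R17 :=
  y3^2*(a1'*y1 + a2'*y2) + y3*(b1'*y1^2 + b2'*y1*y2 + b3'*y2^2) + c1'*y1^2*y2 + c2'*y1*y2^2

def A1 : R17 := a1*w' - a1'*w
def A2 : R17 := a2*w' - a2'*w
def B1 : R17 := b1*w' - b1'*w
def B2 : R17 := b2*w' - b2'*w
def B3 : R17 := b3*w' - b3'*w
def C1 : R17 := c1*w' - c1'*w
def C2 : R17 := c2*w' - c2'*w

def r1' : R17 := B1*A2^2 - B2*A1*A2 + B3*A1^2
def r3' : R17 := A2*C1 - A1*C2
def r1 : R17 := A2*r1'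
def r2 : R17 := -(A1*r1')
def r3 : R17 := A1*A2*r3'
def γ4 : R17 := y1*A1 + y2*A2
def κ : R17 := a1*b1' - a1'*b1

/-- C₅, in terms of the three exact quotients q₁ = (B₁+κy₁y₃²)/y₂,
q₂ = (A₁−κy₁²y₃)/y₂, q₃ = (A₂y₃+B₃y₂)/y₁. -/
def C5 (q1 q2 q3 : R17) : R17 := A2*q1 + q2*q3 + κ*B3*y1*y3
def φ6 (q1 q2 q3 : R17) : R17 := A1*C2 + y3 * C5 q1 q2 q3
def ψ6 (q1 q2 q3 : R17) : R17 := A2*C1 + y3 * C5 q1 q2 q3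

set_option maxHeartbeats 1000000 in
lemma keyW (W W' : R17) :
    y1*y2*(y3*((a2*W'-a2'*W)*((b1*W'-b1'*W)*(a2*W'-a2'*W)^2
        - (b2*W'-b2'*W)*(a1*W'-a1'*W)*(a2*W'-a2'*W)
        + (b3*W'-b3'*W)*(a1*W'-a1'*W)^2))
      - y1*((a1*W'-a1'*W)*((a2*W'-a2'*W)*((a2*W'-a2'*W)*(c1*W'-c1'*W)
        - (a1*W'-a1'*W)*(c2*W'-c2'*W)))))
    - (a2*W'-a2'*W)*(y1*(a1*W'-a1'*W)+y2*(a2*W'-a2'*W))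
      * (y1*y2*((a1*W'-a1'*W)*(c2*W'-c2'*W))
        + y3*((a2*W'-a2'*W)*y1*((b1*W'-b1'*W)+(a1*b1'-a1'*b1)*y1*y3^2)
          + ((a1*W'-a1'*W)-(a1*b1'-a1'*b1)*y1^2*y3)*((a2*W'-a2'*W)*y3+(b3*W'-b3'*W)*y2)
          + (a1*b1'-a1'*b1)*(b3*W'-b3'*W)*y1^2*y2*y3))
    = -((a1*W'-a1'*W)*((a2*W'-a2'*W)^2)) * (w*W' - w'*W) := by
  simp only [w, w']
  ring

/-- The identity y₃·r₁ − y₁·r₃ = A₂·γ₄·φ₆. -/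
theorem stmt0 (q1 q2 q3 : R17)
    (h1 : y2 * q1 = B1 + κ*y1*y3^2)
    (h2 : y2 * q2 = A1 - κ*y1^2*y3)
    (h3 : y1 * q3 = A2*y3 + B3*y2) :
    y3 * r1 - y1 * r3 = A2 * γ4 * φ6 q1 q2 q3 := by
  have hy : (y1*y2 : R17) ≠ 0 :=
    mul_ne_zero (MvPolynomial.X_ne_zero _) (MvPolynomial.X_ne_zero _)
  apply mul_left_cancel₀ hy
  have hW := keyW w w'
  simp only [φ6, C5, r1, r3, r1', r3', γ4, A1, A2, B1, B2, B3, C1, C2, κ] at h1 h2 h3 ⊢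
  linear_combination hW
    - (a2*w'-a2'*w)*(y1*(a1*w'-a1'*w)+y2*(a2*w'-a2'*w))*y3*((a2*w'-a2'*w)*y1)*h1
    - (a2*w'-a2'*w)*(y1*(a1*w'-a1'*w)+y2*(a2*w'-a2'*w))*y3*(y1*q3)*h2
    - (a2*w'-a2'*w)*(y1*(a1*w'-a1'*w)+y2*(a2*w'-a2'*w))*y3*((a1*w'-a1'*w)-(a1*b1'-a1'*b1)*y1^2*y3)*h3
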